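/- arXiv:2603.17755 — 4 statements merged into one kernel-verified Lean document; each statement's English description precedes it below -/
import Mathlib

section
/- Let (H,w) be a weighted graph, let v ∈ V(H), let μ be a fractional matching in H, and let γ ≥ 0. Then there is a γ-skew-matching σ in H↔ such that σ ⊴ μ, W(σ) ≥ deg_w(v,μ), and the anchor of σ fits in the w-neighbourhood of v. -/
attribute [local instance] Classical.propDecidable

namespace SkewStmt

variable {V : Type*} [Fintype V]

/-- `w` is the weight function of a weighted digraph on `G`: it assigns a nonnegative
real to every ordered pair and vanishes on non-adjacent pairs (weights need not be
symmetric). -/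
def IsDiWeight (G : SimpleGraph V) (w : V → V → ℝ) : Prop :=
  (∀ u v, 0 ≤ w u v) ∧ ∀ u v, ¬ G.Adj u v → w u v = 0

/-- `w` is the weight function of a weighted graph on `G`: nonnegative, vanishing on
non-adjacent pairs, and symmetric. -/
def IsWeight (G : SimpleGraph V) (w : V → V → ℝ) : Prop :=
  IsDiWeight G w ∧ ∀ u v, w u v = w v u

/-- `μ` is a fractional matching in `G`, encoded as a symmetric function on ordered
pairs with values in `[0,1]`, vanishing off edges, with vertex weights at most `1`. -/
def IsFrac (G : SimpleGraph V) (μ : V → V → ℝ) : Prop :=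
  (∀ u v, μ u v = μ v u) ∧ (∀ u v, 0 ≤ μ u v) ∧ (∀ u v, μ u v ≤ 1) ∧
    (∀ u v, ¬ G.Adj u v → μ u v = 0) ∧ ∀ u, ∑ v, μ u v ≤ 1

/-- Vertex weight `μ(u)` of a fractional matching. -/
noncomputable def mv (μ : V → V → ℝ) (u : V) : ℝ := ∑ v, μ u v

/-- Weight `W(μ)` of a fractional matching: the sum over the (undirected) edges,
i.e. half of the sum over all ordered pairs. -/
noncomputable def mweight (μ : V → V → ℝ) : ℝ := (∑ u, ∑ v, μ u v) / 2

/-- `σ` is a `γ`-skew oriented fractional matching in the associated digraph `G↔`: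
a function on oriented edges with values in `[0,1]`, vanishing off edges, such that
`∑_{v ∈ N(u)} (σ(u,v)/(1+γ) + γ·σ(v,u)/(1+γ)) ≤ 1` for every vertex `u`. -/
def IsSkew (G : SimpleGraph V) (γ : ℝ) (σ : V → V → ℝ) : Prop :=
  (∀ u v, 0 ≤ σ u v) ∧ (∀ u v, σ u v ≤ 1) ∧ (∀ u v, ¬ G.Adj u v → σ u v = 0) ∧
    ∀ u, ∑ v, (σ u v / (1 + γ) + γ * σ v u / (1 + γ)) ≤ 1

/-- `σ¹(u) = (1/(1+γ)) ∑_v σ(u,v)`. -/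
noncomputable def s1 (γ : ℝ) (σ : V → V → ℝ) (u : V) : ℝ := (∑ v, σ u v) / (1 + γ)

/-- `σ²(u) = (γ/(1+γ)) ∑_v σ(v,u)`. -/
noncomputable def s2 (γ : ℝ) (σ : V → V → ℝ) (u : V) : ℝ := γ * (∑ v, σ v u) / (1 + γ)

/-- `σ(u) = σ¹(u) + σ²(u)`, the weight of a skew-matching on a vertex. -/
noncomputable def sv (γ : ℝ) (σ : V → V → ℝ) (u : V) : ℝ := s1 γ σ u + s2 γ σ u

/-- Weight `W(σ)` of a skew-matching: the sum over all oriented edges. -/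
noncomputable def skweight (σ : V → V → ℝ) : ℝ := ∑ u, ∑ v, σ u v

/-- The anchor of `σ` fits in the `w`-neighbourhood of `u`: `σ¹(v) ≤ w(u,v)` for all `v`. -/
def AnchorFits (w : V → V → ℝ) (γ : ℝ) (σ : V → V → ℝ) (u : V) : Prop :=
  ∀ v, s1 γ σ v ≤ w u v

/-- The anchor `𝒜(σ) = {v : σ¹(v) > 0}` of `σ` is contained in `U`. -/
def AnchorSub (γ : ℝ) (σ : V → V → ℝ) (U : Finset V) : Prop :=
  ∀ v, 0 < s1 γ σ v → v ∈ U

/-- `(σA, σB)` is a `(γA,γB)`-skew-matching pair anchored in the oriented edge `(c,d)`: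
`σA`, `σB` are disjoint skew-matchings with the respective skews, the anchor of `σA`
fits in the `w`-neighbourhood of `c`, the anchor of `σB` fits in the
`w`-neighbourhood of `d`, and `max{w(c,x),w(d,x)} ≥ σA¹(x)+σB¹(x)` for every common
neighbour `x` of `c` and `d`. -/
def IsPairAnchored (G : SimpleGraph V) (w : V → V → ℝ) (γA γB : ℝ)
    (σA σB : V → V → ℝ) (c d : V) : Prop :=
  IsSkew G γA σA ∧ IsSkew G γB σB ∧
    (∀ u, sv γA σA u + sv γB σB u ≤ 1) ∧
    AnchorFits w γA σA c ∧ AnchorFits w γB σB d ∧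
    ∀ x, G.Adj c x → G.Adj d x → s1 γA σA x + s1 γB σB x ≤ max (w c x) (w d x)

/-- `σ ⊴ μ` for a `γ`-skew-matching `σ` and a fractional matching `μ`. -/
def Dom (γ : ℝ) (σ μ : V → V → ℝ) : Prop :=
  ∀ x y, 0 < σ x y + σ y x → (σ x y + γ * σ y x) / (1 + γ) ≤ μ x y

/-- `σA + σB ⊴ μ` for skew-matchings `σA, σB` with skews `γA, γB` and a fractional
matching `μ`. -/
def Dom2 (γA γB : ℝ) (σA σB μ : V → V → ℝ) : Prop :=
  ∀ x y, 0 < σA x y + σA y x + σB x y + σB y x →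
    (σA x y + γA * σA y x) / (1 + γA) + (σB x y + γB * σB y x) / (1 + γB) ≤ μ x y

/-- Saturation `deg_w(u, ν) = ∑_v min{ν(v), w(u,v)}` of the neighbourhood of `u` by an
object with vertex weights `f`. -/
noncomputable def satdeg (w : V → V → ℝ) (u : V) (f : V → ℝ) : ℝ := ∑ v, min (f v) (w u v)

/-- The fractional matching `μ` runs between the disjoint sets `U` and `W`. -/
def RunsBetween (μ : V → V → ℝ) (U W : Finset V) : Prop :=
  ∀ x y, 0 < μ x y → (x ∈ U ∧ y ∈ W) ∨ (x ∈ W ∧ y ∈ U)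

/-- `σ'` (a `γ'`-skew-matching) is a skew sub-matching of `σ` (a `γ`-skew-matching). -/
def SkewLe (γ' γ : ℝ) (σ' σ : V → V → ℝ) : Prop :=
  ∀ u v, σ' u v / (1 + γ') ≤ σ u v / (1 + γ) ∧
    γ' * σ' u v / (1 + γ') ≤ γ * σ u v / (1 + γ)

end SkewStmt

open SkewStmt

/-- Combination Lemma. -/
theorem combination_lemma {V : Type*} [Fintype V]
    (H : SimpleGraph V) (w : V → V → ℝ) (hw : IsWeight H w)
    (v : V) (μ : V → V → ℝ) (hμ : IsFrac H μ) (γ : ℝ) (hγ : 0 ≤ γ) :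
    ∃ σ : V → V → ℝ,
      IsSkew H γ σ ∧ Dom γ σ μ ∧
      satdeg w v (mv μ) ≤ skweight σ ∧
      AnchorFits w γ σ v := by
  obtain ⟨hsymm, hnn, hle1, hzero, hdeg⟩ := hμ
  have hw0 : ∀ u x, 0 ≤ w u x := hw.1.1
  have hpos : (0:ℝ) < 1 + γ := by linarith
  have hmv0 : ∀ x, 0 ≤ mv μ x := fun x => Finset.sum_nonneg fun y _ => hnn x y
  set t : V → ℝ := fun x => if mv μ x = 0 then 0 else min (mv μ x) (w v x) / mv μ x
    with ht
  have hmin0 : ∀ x, 0 ≤ min (mv μ x) (w v x) := fun x => le_min (hmv0 x) (hw0 v x)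
  have ht0 : ∀ x, 0 ≤ t x := by
    intro x
    simp only [ht]
    split
    · exact le_refl 0
    · exact div_nonneg (hmin0 x) (hmv0 x)
  have ht1 : ∀ x, t x ≤ 1 := by
    intro x
    simp only [ht]
    split
    · exact zero_le_one
    · rename_i h
      rw [div_le_one ((hmv0 x).lt_of_ne (Ne.symm h))]
      exact min_le_left _ _
  have htm : ∀ x, t x * mv μ x = min (mv μ x) (w v x) := by
    intro x
    simp only [ht]
    split
    · rename_i h
      rw [h, zero_mul]
      rw [h] at *
      exact (min_eq_left (hw0 v x)).symm
    · rename_i h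
      exact div_mul_cancel₀ _ h
  refine ⟨fun x y => t x * μ x y, ⟨?_, ?_, ?_, ?_⟩, ?_, ?_, ?_⟩
  · exact fun x y => mul_nonneg (ht0 x) (hnn x y)
  · exact fun x y => mul_le_one₀ (ht1 x) (hnn x y) (hle1 x y)
  · intro x y h
    show t x * μ x y = 0
    rw [hzero x y h, mul_zero]
  · intro u
    have hterm : ∀ y ∈ Finset.univ, t u * μ u y / (1 + γ) + γ * (t y * μ y u) / (1 + γ)
        ≤ μ u y := by
      intro y _
      rw [hsymm y u, ← add_div, div_le_iff₀ hpos]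
      nlinarith [ht0 u, ht0 y, ht1 u, ht1 y, hnn u y, mul_le_of_le_one_left (hnn u y) (ht1 u),
        mul_le_of_le_one_left (hnn u y) (ht1 y)]
    calc ∑ y, (t u * μ u y / (1 + γ) + γ * (t y * μ y u) / (1 + γ))
        ≤ ∑ y, μ u y := Finset.sum_le_sum hterm
      _ ≤ 1 := hdeg u
  · intro x y _
    show (t x * μ x y + γ * (t y * μ y x)) / (1 + γ) ≤ μ x y
    rw [hsymm y x, div_le_iff₀ hpos]
    nlinarith [ht0 x, ht0 y, hnn x y, mul_le_of_le_one_left (hnn x y) (ht1 x),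
      mul_le_of_le_one_left (hnn x y) (ht1 y)]
  · apply le_of_eq
    unfold satdeg skweight
    rw [Finset.sum_congr rfl fun x _ => ?_]
    rw [← Finset.mul_sum]
    exact (htm x).symm
  · intro x
    unfold s1
    rw [← Finset.mul_sum]
    have : t x * ∑ y, μ x y = min (mv μ x) (w v x) := htm x
    rw [show (∑ y, μ x y) = mv μ x from rfl, htm x]
    calc min (mv μ x) (w v x) / (1 + γ) ≤ min (mv μ x) (w v x) :=
          div_le_self (hmin0 x) (by linarith)
      _ ≤ w v x := min_le_right _ _
end

section
/- Let (H,w) be a weighted graph, let γ_A > 0 and γ_B ≥ 1, let u ∈ V(H), and let σ_B be a γ_B-skew-matching in H↔ whose anchor fits in the w-neighbourhood of u. Then there is a γ_A-skew-matching σ_A in H↔ such that σ_A ≤ σ_B (σ_A is a skew sub-matching of σ_B), W(σ_A) = ((1 + min{γ_A, γ_A⁻¹})/(1 + γ_B))·W(σ_B), and the anchor of σ_A fits in the w-neighbourhood of u. -/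
attribute [local instance] Classical.propDecidable

open SkewStmt

/-- Extending-out skew-matching. -/
theorem extending_out_skew {V : Type*} [Fintype V]
    (H : SimpleGraph V) (w : V → V → ℝ) (hw : IsWeight H w)
    (γA γB : ℝ) (hγA : 0 < γA) (hγB : 1 ≤ γB) (u : V)
    (σB : V → V → ℝ) (hσB : IsSkew H γB σB) (hfit : AnchorFits w γB σB u) :
    ∃ σA : V → V → ℝ,
      IsSkew H γA σA ∧ SkewLe γA γB σA σB ∧
      skweight σA = (1 + min γA γA⁻¹) / (1 + γB) * skweight σB ∧
      AnchorFits w γA σA u := by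
  classical
  obtain ⟨hB0, hB1', hBadj, hBdeg⟩ := hσB
  set m := min γA γA⁻¹ with hm
  set c := (1 + m) / (1 + γB) with hc
  have hA1 : (0:ℝ) < 1 + γA := by linarith
  have hB1 : (0:ℝ) < 1 + γB := by linarith
  have hm0 : 0 ≤ m := le_min hγA.le (inv_nonneg.mpr hγA.le)
  have hm1 : m ≤ 1 := by
    rcases le_total γA 1 with h | h
    · exact le_trans (min_le_left _ _) h
    · exact le_trans (min_le_right _ _) (by
        rw [inv_le_one_iff₀]; right; exact h)
  have key1 : 1 + m ≤ 1 + γA := by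
    have := min_le_left γA γA⁻¹; linarith
  have key2 : γA * (1 + m) ≤ 1 + γA := by
    have h1 : γA * m ≤ γA * γA⁻¹ :=
      mul_le_mul_of_nonneg_left (min_le_right _ _) hγA.le
    have h2 : γA * γA⁻¹ = 1 := mul_inv_cancel₀ hγA.ne'
    nlinarith
  have hc0 : 0 ≤ c := div_nonneg (by linarith) hB1.le
  have hc1 : c ≤ 1 := by
    rw [hc, div_le_one hB1]; linarith
  -- scalar inequalities
  have h1 : c / (1 + γA) ≤ 1 / (1 + γB) := by
    rw [div_le_div_iff₀ hA1 hB1]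
    have hcmul : c * (1 + γB) = 1 + m := by
      rw [hc]; field_simp
    rw [hcmul, one_mul]; exact key1
  have h2 : γA * c / (1 + γA) ≤ γB / (1 + γB) := by
    rw [div_le_div_iff₀ hA1 hB1, hc]
    have : γA * ((1 + m) / (1 + γB)) * (1 + γB) = γA * (1 + m) := by
      field_simp
    rw [this]
    nlinarith
  refine ⟨fun x y => c * σB x y, ⟨?_, ?_, ?_, ?_⟩, ?_, ?_, ?_⟩
  · exact fun x y => mul_nonneg hc0 (hB0 x y)
  · intro x y
    calc c * σB x y ≤ 1 * 1 := by
          exact mul_le_mul hc1 (hB1' x y) (hB0 x y) zero_le_one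
      _ = 1 := one_mul 1
  · intro x y h; show c * σB x y = 0; rw [hBadj x y h, mul_zero]
  · intro x
    calc ∑ v, (c * σB x v / (1 + γA) + γA * (c * σB v x) / (1 + γA))
        ≤ ∑ v, (σB x v / (1 + γB) + γB * σB v x / (1 + γB)) := by
          apply Finset.sum_le_sum
          intro v _
          have e1 : c * σB x v / (1 + γA) = σB x v * (c / (1 + γA)) := by ring
          have e2 : σB x v / (1 + γB) = σB x v * (1 / (1 + γB)) := by ring
          have e3 : γA * (c * σB v x) / (1 + γA) = σB v x * (γA * c / (1 + γA)) := by
            ring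
          have e4 : γB * σB v x / (1 + γB) = σB v x * (γB / (1 + γB)) := by ring
          rw [e1, e2, e3, e4]
          exact add_le_add (mul_le_mul_of_nonneg_left h1 (hB0 x v))
            (mul_le_mul_of_nonneg_left h2 (hB0 v x))
      _ ≤ 1 := hBdeg x
  · intro x y
    constructor
    · have e1 : c * σB x y / (1 + γA) = σB x y * (c / (1 + γA)) := by ring
      have e2 : σB x y / (1 + γB) = σB x y * (1 / (1 + γB)) := by ring
      rw [e1, e2]
      exact mul_le_mul_of_nonneg_left h1 (hB0 x y)
    · have e3 : γA * (c * σB x y) / (1 + γA) = σB x y * (γA * c / (1 + γA)) := by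
        ring
      have e4 : γB * σB x y / (1 + γB) = σB x y * (γB / (1 + γB)) := by ring
      rw [e3, e4]
      exact mul_le_mul_of_nonneg_left h2 (hB0 x y)
  · unfold skweight
    rw [Finset.mul_sum]
    congr 1
    funext x
    rw [Finset.mul_sum]
  · intro v
    have hfv := hfit v
    unfold s1 at hfv ⊢
    have hsum0 : 0 ≤ ∑ x, σB v x := Finset.sum_nonneg fun x _ => hB0 v x
    have e1 : (∑ x, c * σB v x) / (1 + γA) = (∑ x, σB v x) * (c / (1 + γA)) := by
      rw [← Finset.mul_sum]; ring
    have e2 : (∑ x, σB v x) / (1 + γB) = (∑ x, σB v x) * (1 / (1 + γB)) := by ring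
    calc (∑ x, c * σB v x) / (1 + γA) ≤ (∑ x, σB v x) / (1 + γB) := by
          rw [e1, e2]; exact mul_le_mul_of_nonneg_left h1 hsum0
      _ ≤ w u v := hfv
end

section
/- Let (H,w) be a weighted graph and uv ∈ E(H). Let μ₁, μ₂, μ be fractional matchings in H with μ₁(e) + μ₂(e) ≤ μ(e) for every edge e, and let (H,w̄) be the μ₁-truncated weighted digraph obtained from (the associated weighted digraph of) (H,w). Then, for any γ₁, γ₂ > 0, there is a (γ₁,γ₂)-skew-matching pair (σ₁,σ₂) in (H,w) anchored in the oriented edge (u,v) with W(σ₁) = deg_w(u,μ₁), W(σ₂) = deg_{w̄}(v,μ₂), and σ₁ + σ₂ ⊴ μ. -/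
attribute [local instance] Classical.propDecidable

open SkewStmt

private lemma mv_nonneg' {V : Type*} [Fintype V] {μ : V → V → ℝ}
    (h : ∀ x y, 0 ≤ μ x y) (x : V) : 0 ≤ mv μ x :=
  Finset.sum_nonneg fun y _ => h x y

private lemma aux_exists {V : Type*} [Fintype V] (μ : V → V → ℝ) (ω : V → ℝ)
    (hω : ∀ x, 0 ≤ ω x) (hμ : ∀ x y, 0 ≤ μ x y) :
    ∃ σ : V → V → ℝ, (∀ x y, 0 ≤ σ x y) ∧ (∀ x y, σ x y ≤ μ x y) ∧
      ∀ x, ∑ y, σ x y = min (mv μ x) (ω x) := by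
  classical
  set c : V → ℝ := fun x => if mv μ x = 0 then 0 else min (mv μ x) (ω x) / mv μ x with hc
  have hc0 : ∀ x, 0 ≤ c x := by
    intro x
    simp only [hc]
    split
    · exact le_refl 0
    · exact div_nonneg (le_min (mv_nonneg' hμ x) (hω x)) (mv_nonneg' hμ x)
  have hc1 : ∀ x, c x ≤ 1 := by
    intro x
    simp only [hc]
    split
    · norm_num
    · rename_i h
      have hpos : 0 < mv μ x := lt_of_le_of_ne (mv_nonneg' hμ x) (Ne.symm h)
      exact (div_le_one hpos).mpr (min_le_left _ _)
  refine ⟨fun x y => c x * μ x y, fun x y => mul_nonneg (hc0 x) (hμ x y), ?_, ?_⟩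
  · intro x y
    calc c x * μ x y ≤ 1 * μ x y := mul_le_mul_of_nonneg_right (hc1 x) (hμ x y)
    _ = μ x y := one_mul _
  · intro x
    rw [← Finset.mul_sum]
    by_cases h : mv μ x = 0
    · have hs : (∑ y, μ x y) = 0 := h
      rw [hs, h, mul_zero, min_eq_left (hω x)]
    · have hs : (∑ y, μ x y) = mv μ x := rfl
      rw [hs]
      simp only [hc, if_neg h]
      rw [div_mul_cancel₀ _ h]

private lemma aux_skew {V : Type*} [Fintype V] {G : SimpleGraph V} {μ σ : V → V → ℝ} {γ : ℝ}
    (hγ : 0 < γ) (hμ : IsFrac G μ) (h0 : ∀ x y, 0 ≤ σ x y)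
    (hle : ∀ x y, σ x y ≤ μ x y) :
    IsSkew G γ σ ∧ ∀ x, sv γ σ x ≤ mv μ x := by
  have h1γ : (0:ℝ) < 1 + γ := by linarith
  have hrow : ∀ x, ∑ y, σ x y ≤ mv μ x := fun x => Finset.sum_le_sum fun y _ => hle x y
  have hcol : ∀ x, ∑ y, σ y x ≤ mv μ x := by
    intro x
    calc ∑ y, σ y x ≤ ∑ y, μ y x := Finset.sum_le_sum fun y _ => hle y x
    _ = ∑ y, μ x y := Finset.sum_congr rfl fun y _ => hμ.1 y x
    _ = mv μ x := rfl
  have hsv : ∀ x, sv γ σ x ≤ mv μ x := by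
    intro x
    unfold sv s1 s2
    rw [← add_div, div_le_iff₀ h1γ]
    have h1 := hrow x
    have h2 := mul_le_mul_of_nonneg_left (hcol x) hγ.le
    nlinarith
  refine ⟨⟨h0, fun x y => (hle x y).trans (hμ.2.2.1 x y), ?_, ?_⟩, hsv⟩
  · intro x y hxy
    exact le_antisymm ((hle x y).trans_eq (hμ.2.2.2.1 x y hxy)) (h0 x y)
  · intro x
    have heq : ∑ y, (σ x y / (1 + γ) + γ * σ y x / (1 + γ)) = sv γ σ x := by
      unfold sv s1 s2
      rw [Finset.sum_add_distrib, ← Finset.sum_div, ← Finset.sum_div, ← Finset.mul_sum]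
    rw [heq]
    exact (hsv x).trans (hμ.2.2.2.2 x)

/-- Filling disjoint matchings. -/
theorem filling_disjoint_matchings {V : Type*} [Fintype V]
    (H : SimpleGraph V) (w : V → V → ℝ) (hw : IsWeight H w)
    (u v : V) (huv : H.Adj u v)
    (μ₁ μ₂ μ : V → V → ℝ)
    (hμ₁ : IsFrac H μ₁) (hμ₂ : IsFrac H μ₂) (hμ : IsFrac H μ)
    (hle : ∀ x y, μ₁ x y + μ₂ x y ≤ μ x y)
    (γ₁ γ₂ : ℝ) (hγ₁ : 0 < γ₁) (hγ₂ : 0 < γ₂) :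
    ∃ σ₁ σ₂ : V → V → ℝ,
      IsPairAnchored H w γ₁ γ₂ σ₁ σ₂ u v ∧
      skweight σ₁ = satdeg w u (mv μ₁) ∧
      skweight σ₂ = satdeg (fun a x => max 0 (w a x - mv μ₁ x)) v (mv μ₂) ∧
      Dom2 γ₁ γ₂ σ₁ σ₂ μ := by
  classical
  obtain ⟨⟨hw0, _⟩, _⟩ := hw
  have hm1 := hμ₁.2.1
  have hm2 := hμ₂.2.1
  obtain ⟨σ₁, h10, h1le, h1sum⟩ := aux_exists μ₁ (w u) (fun x => hw0 u x) hm1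
  obtain ⟨σ₂, h20, h2le, h2sum⟩ :=
    aux_exists μ₂ (fun x => max 0 (w v x - mv μ₁ x)) (fun x => le_max_left 0 _) hm2
  obtain ⟨hsk₁, hsv₁⟩ := aux_skew hγ₁ hμ₁ h10 h1le
  obtain ⟨hsk₂, hsv₂⟩ := aux_skew hγ₂ hμ₂ h20 h2le
  have h1γ₁ : (0:ℝ) < 1 + γ₁ := by linarith
  have h1γ₂ : (0:ℝ) < 1 + γ₂ := by linarith
  have hmv1 : ∀ x, 0 ≤ mv μ₁ x := mv_nonneg' hm1
  have hmv2 : ∀ x, 0 ≤ mv μ₂ x := mv_nonneg' hm2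
  have hmvsum : ∀ x, mv μ₁ x + mv μ₂ x ≤ mv μ x := by
    intro x
    unfold mv
    rw [← Finset.sum_add_distrib]
    exact Finset.sum_le_sum fun y _ => hle x y
  have hs1₁ : ∀ x, s1 γ₁ σ₁ x = min (mv μ₁ x) (w u x) / (1 + γ₁) := by
    intro x; unfold s1; rw [h1sum x]
  have hs1₂ : ∀ x, s1 γ₂ σ₂ x = min (mv μ₂ x) (max 0 (w v x - mv μ₁ x)) / (1 + γ₂) := by
    intro x; unfold s1; rw [h2sum x]
  refine ⟨σ₁, σ₂, ⟨hsk₁, hsk₂, ?_, ?_, ?_, ?_⟩, ?_, ?_, ?_⟩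
  · intro x
    have h1 : mv μ x ≤ 1 := hμ.2.2.2.2 x
    linarith [hsv₁ x, hsv₂ x, hmvsum x]
  · intro x
    rw [hs1₁ x]
    have hminn : 0 ≤ min (mv μ₁ x) (w u x) := le_min (hmv1 x) (hw0 u x)
    calc _ ≤ min (mv μ₁ x) (w u x) := div_le_self hminn (by linarith)
    _ ≤ w u x := min_le_right _ _
  · intro x
    rw [hs1₂ x]
    have hminn : 0 ≤ min (mv μ₂ x) (max 0 (w v x - mv μ₁ x)) :=
      le_min (hmv2 x) (le_max_left _ _)
    calc _ ≤ min (mv μ₂ x) (max 0 (w v x - mv μ₁ x)) := div_le_self hminn (by linarith)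
    _ ≤ max 0 (w v x - mv μ₁ x) := min_le_right _ _
    _ ≤ w v x := max_le (hw0 v x) (by linarith [hmv1 x])
  · intro x _ _
    rw [hs1₁ x, hs1₂ x]
    set a := min (mv μ₁ x) (w u x) with ha
    set b := min (mv μ₂ x) (max 0 (w v x - mv μ₁ x)) with hb
    have ha0 : 0 ≤ a := le_min (hmv1 x) (hw0 u x)
    have hb0 : 0 ≤ b := le_min (hmv2 x) (le_max_left _ _)
    have key : a + b ≤ max (w u x) (w v x) := by
      rcases le_or_gt (w v x) (mv μ₁ x) with h | h
      · have hb' : b ≤ 0 := le_trans (min_le_right _ _) (by rw [max_eq_left]; linarith)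
        have ha' : a ≤ w u x := min_le_right _ _
        have := le_max_left (w u x) (w v x)
        linarith
      · have hb' : b ≤ w v x - mv μ₁ x :=
          le_trans (min_le_right _ _) (by rw [max_eq_right]; linarith)
        have ha' : a ≤ mv μ₁ x := min_le_left _ _
        have := le_max_right (w u x) (w v x)
        linarith
    have h1 : a / (1 + γ₁) ≤ a := div_le_self ha0 (by linarith)
    have h2 : b / (1 + γ₂) ≤ b := div_le_self hb0 (by linarith)
    linarith
  · exact Finset.sum_congr rfl fun x _ => h1sum x
  · exact Finset.sum_congr rfl fun x _ => h2sum x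
  · intro x y _
    have e1 : (σ₁ x y + γ₁ * σ₁ y x) / (1 + γ₁) ≤ μ₁ x y := by
      rw [div_le_iff₀ h1γ₁]
      have h1 : σ₁ y x ≤ μ₁ x y := (h1le y x).trans_eq (hμ₁.1 y x)
      have h2 := mul_le_mul_of_nonneg_left h1 hγ₁.le
      nlinarith [h1le x y, hμ₁.2.1 x y]
    have e2 : (σ₂ x y + γ₂ * σ₂ y x) / (1 + γ₂) ≤ μ₂ x y := by
      rw [div_le_iff₀ h1γ₂]
      have h1 : σ₂ y x ≤ μ₂ x y := (h2le y x).trans_eq (hμ₂.1 y x)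
      have h2 := mul_le_mul_of_nonneg_left h1 hγ₂.le
      nlinarith [h2le x y, hμ₂.2.1 x y]
    linarith [hle x y]
end

section
/- Suppose 2ε ≤ 𝔡 ≤ 1/3 and ε < 𝔡²·η̃/8. Let (F,r,x) be a rooted shrub, let (X,Y) be an ε-regular pair in a graph G with d(X,Y) ≥ 𝔡 and |X| = |Y|, let U ⊆ X ∪ Y and P ⊆ X be disjoint sets, and let v ∈ X ∖ P. Assume: (i) |X ∩ U| ≥ η̃·|X| and |Y ∩ U| ≥ η̃·|X|; (ii) |P| ≥ 2ε·|X|; (iii) v has at least 2ε·|Y| neighbours in Y ∩ U; and (iv) |V(F)| ≤ ε·|X|. Then there is an embedding φ of F in G such that φ(r) = v, φ maps V(F) ∖ {x,r} into U, and, if the adventitious root x exists, φ(x) ∈ P. -/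
open Finset SimpleGraph

section TreeHelpers

variable {W : Type*} [DecidableEq W] {H : SimpleGraph W}

lemma shrub_tree_path_length (hT : H.IsTree) {a b : W} {p : H.Walk a b} (hp : p.IsPath) :
    p.length = H.dist a b := by
  obtain ⟨q, hq⟩ := (hT.isConnected a b).exists_walk_length_eq_dist
  have h1 : p = q.bypass := (hT.existsUnique_path a b).unique hp q.bypass_isPath
  have h2 : q.bypass.length ≤ q.length := q.length_bypass_le
  have h3 : H.dist a b ≤ p.length := SimpleGraph.dist_le p
  have h4 : p.length = q.bypass.length := by rw [h1]
  omega

lemma shrub_dist_le_of_mem_support {a b u : W} (p : H.Walk a b) (hu : u ∈ p.support) :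
    H.dist a u ≤ p.length :=
  le_trans (SimpleGraph.dist_le (p.takeUntil u hu)) (p.length_takeUntil_le hu)

omit [DecidableEq W] in
lemma shrub_exists_parent (hconn : H.Connected) {r w : W} (hwr : w ≠ r) :
    ∃ p, H.Adj p w ∧ H.dist r p + 1 = H.dist r w := by
  obtain ⟨q, hq⟩ := (hconn w r).exists_walk_length_eq_dist
  obtain ⟨u, hadj, q', hq'⟩ := q.exists_eq_cons_of_ne hwr
  refine ⟨u, hadj.symm, ?_⟩
  have h1 : H.dist r u ≤ q'.length := by
    rw [SimpleGraph.dist_comm]; exact SimpleGraph.dist_le q'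
  have h2 : q'.length + 1 = H.dist r w := by
    have := congrArg SimpleGraph.Walk.length hq'
    simp only [SimpleGraph.Walk.length_cons] at this
    rw [SimpleGraph.dist_comm]; omega
  have h3 : H.dist r w ≤ H.dist r u + 1 := by
    obtain ⟨m, hm⟩ := (hconn r u).exists_walk_length_eq_dist
    have := SimpleGraph.dist_le (m.concat hadj.symm)
    rwa [SimpleGraph.Walk.length_concat, hm] at this
  omega

lemma shrub_adj_dist_ne (hT : H.IsTree) {r a b : W} (hab : H.Adj a b) :
    H.dist r a ≠ H.dist r b := by
  intro heq
  obtain ⟨p, hp⟩ := (hT.existsUnique_path r a).exists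
  have hplen : p.length = H.dist r a := shrub_tree_path_length hT hp
  have hbns : b ∉ p.support := by
    intro hb
    have h1 : H.dist r b ≤ (p.takeUntil b hb).length := SimpleGraph.dist_le _
    have h2 := congrArg SimpleGraph.Walk.length (p.take_spec hb)
    rw [SimpleGraph.Walk.length_append] at h2
    have h3 : (p.dropUntil b hb).length = 0 := by omega
    exact hab.ne (SimpleGraph.Walk.eq_of_length_eq_zero h3).symm
  have hcpath : (p.concat hab).IsPath := by
    rw [← SimpleGraph.Walk.isPath_reverse_iff, SimpleGraph.Walk.reverse_concat]
    exact hp.reverse.cons (by rwa [SimpleGraph.Walk.support_reverse, List.mem_reverse])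
  have := shrub_tree_path_length hT hcpath
  rw [SimpleGraph.Walk.length_concat, hplen] at this
  omega

lemma shrub_parent_unique (hT : H.IsTree) {r w p p' : W} (h1 : H.Adj p w) (h2 : H.Adj p' w)
    (hd1 : H.dist r p + 1 = H.dist r w) (hd2 : H.dist r p' + 1 = H.dist r w) : p = p' := by
  obtain ⟨P1, hP1⟩ := (hT.existsUnique_path r p).exists
  obtain ⟨P2, hP2⟩ := (hT.existsUnique_path r p').exists
  have hl1 : P1.length = H.dist r p := shrub_tree_path_length hT hP1
  have hl2 : P2.length = H.dist r p' := shrub_tree_path_length hT hP2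
  have hw1 : w ∉ P1.support := fun hb => by
    have := shrub_dist_le_of_mem_support P1 hb; omega
  have hw2 : w ∉ P2.support := fun hb => by
    have := shrub_dist_le_of_mem_support P2 hb; omega
  have hQ1 : (P1.concat h1).IsPath := by
    rw [← SimpleGraph.Walk.isPath_reverse_iff, SimpleGraph.Walk.reverse_concat]
    exact hP1.reverse.cons (by rwa [SimpleGraph.Walk.support_reverse, List.mem_reverse])
  have hQ2 : (P2.concat h2).IsPath := by
    rw [← SimpleGraph.Walk.isPath_reverse_iff, SimpleGraph.Walk.reverse_concat]
    exact hP2.reverse.cons (by rwa [SimpleGraph.Walk.support_reverse, List.mem_reverse])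
  have hQeq : P1.concat h1 = P2.concat h2 := (hT.existsUnique_path r w).unique hQ1 hQ2
  have hpmem : p ∈ (P2.concat h2).support := by
    rw [← hQeq, SimpleGraph.Walk.support_concat, List.mem_append]
    exact Or.inl P1.end_mem_support
  rw [SimpleGraph.Walk.support_concat, List.mem_append] at hpmem
  rcases hpmem with hpmem | hpmem
  · have ha : H.dist r p ≤ (P2.takeUntil p hpmem).length := SimpleGraph.dist_le _
    have hb := congrArg SimpleGraph.Walk.length (P2.take_spec hpmem)
    rw [SimpleGraph.Walk.length_append] at hb
    have h3 : (P2.dropUntil p hpmem).length = 0 := by omega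
    exact SimpleGraph.Walk.eq_of_length_eq_zero h3
  · simp only [List.mem_singleton] at hpmem
    subst hpmem; omega

lemma shrub_adj_dist_cases (hT : H.IsTree) {r a b : W} (hab : H.Adj a b) :
    H.dist r a + 1 = H.dist r b ∨ H.dist r b + 1 = H.dist r a := by
  have hne := shrub_adj_dist_ne hT (r := r) hab
  have h3 : H.dist r b ≤ H.dist r a + 1 := by
    obtain ⟨m, hm⟩ := (hT.isConnected r a).exists_walk_length_eq_dist
    have := SimpleGraph.dist_le (m.concat hab)
    rwa [SimpleGraph.Walk.length_concat, hm] at this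
  have h4 : H.dist r a ≤ H.dist r b + 1 := by
    obtain ⟨m, hm⟩ := (hT.isConnected r b).exists_walk_length_eq_dist
    have := SimpleGraph.dist_le (m.concat hab.symm)
    rwa [SimpleGraph.Walk.length_concat, hm] at this
  omega

end TreeHelpers

section CountHelpers

variable {V : Type*} [DecidableEq V] {G : SimpleGraph V} [DecidableRel G.Adj]

omit [DecidableEq V] in
lemma shrub_card_interedges_eq_sum (B S : Finset V) :
    (G.interedges B S).card = ∑ u ∈ B, (S.filter (G.Adj u)).card := by
  rw [interedges_def, Finset.card_filter, Finset.sum_product]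
  exact Finset.sum_congr rfl fun u _ => (Finset.card_filter _ _).symm

lemma shrub_real_card_sdiff_ge (A B : Finset V) :
    (A.card : ℝ) - B.card ≤ ((A \ B).card : ℝ) := by
  have := Finset.card_le_card_sdiff_add_card (s := A) (t := B)
  have h2 : (A.card : ℝ) ≤ ((A \ B).card : ℝ) + B.card := by exact_mod_cast this
  linarith

lemma shrub_filter_sdiff_card_ge (A B : Finset V) (p : V → Prop) [DecidablePred p] :
    ((A.filter p).card : ℝ) - B.card ≤ (((A \ B).filter p).card : ℝ) := by
  have hsub : (A.filter p) \ B ⊆ (A \ B).filter p := by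
    intro a ha
    simp only [Finset.mem_sdiff, Finset.mem_filter] at ha ⊢
    tauto
  have := shrub_real_card_sdiff_ge (A.filter p) B
  have h2 : (((A.filter p) \ B).card : ℝ) ≤ (((A \ B).filter p).card : ℝ) := by
    exact_mod_cast Finset.card_le_card hsub
  linarith

lemma shrub_bad_small {ε δ : ℝ} {X Y S : Finset V} (hreg : G.IsUniform ε X Y)
    (hS : S ⊆ Y) (hScard : (Y.card : ℝ) * ε ≤ S.card)
    (hδ : δ ≤ (G.edgeDensity X Y : ℝ)) (hεδ : ε < δ)
    (B : Finset V) (hB : B ⊆ X)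
    (hbad : ∀ u ∈ B, ((S.filter (G.Adj u)).card : ℝ) < (δ - ε) * S.card) :
    (B.card : ℝ) < ε * X.card := by
  by_contra hcon
  push_neg at hcon
  have hcard : (X.card : ℝ) * ε ≤ B.card := by linarith [hcon]
  have huni := hreg hB hS hcard hScard
  have hlow : (δ : ℝ) - ε < (G.edgeDensity B S : ℝ) := by
    have := abs_lt.1 huni
    linarith [this.1]
  rcases B.eq_empty_or_nonempty with rfl | hBne
  · rw [edgeDensity_empty_left] at hlow
    norm_num at hlow; linarith
  have hSne : S.Nonempty := by
    obtain ⟨u, hu⟩ := hBne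
    have := hbad u hu
    rcases S.eq_empty_or_nonempty with rfl | h
    · simp at this
    · exact h
  have hsum : ((G.interedges B S).card : ℝ) < B.card * ((δ - ε) * S.card) := by
    rw [shrub_card_interedges_eq_sum]
    push_cast
    calc (∑ u ∈ B, ((S.filter (G.Adj u)).card : ℝ)) < ∑ _u ∈ B, (δ - ε) * S.card :=
          Finset.sum_lt_sum_of_nonempty hBne hbad
      _ = B.card * ((δ - ε) * S.card) := by rw [Finset.sum_const, nsmul_eq_mul]
  have hBpos : (0:ℝ) < B.card := by exact_mod_cast Finset.card_pos.2 hBne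
  have hSpos : (0:ℝ) < S.card := by exact_mod_cast Finset.card_pos.2 hSne
  have hED : (G.edgeDensity B S : ℝ) = ((G.interedges B S).card : ℝ) / (B.card * S.card) := by
    rw [edgeDensity_def]
    push_cast
    ring
  rw [hED, lt_div_iff₀ (by positivity : (0:ℝ) < (B.card : ℝ) * S.card)] at hlow
  nlinarith [hlow, hsum]

end CountHelpers

/-- Embedding a shrub in a regular pair.
A rooted shrub is a tree `F` with a root `r` and an optional adventitious root `x?`
whose distance to `r` is even and at least 4. -/
theorem embed_shrub {V W : Type*} [Fintype V] [DecidableEq V] [Fintype W]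
    (G : SimpleGraph V) [DecidableRel G.Adj]
    (ε d η : ℝ) (hεd : 2 * ε ≤ d) (hd : d ≤ 1 / 3) (hε : ε < d ^ 2 * η / 8)
    (F : SimpleGraph W) (hF : F.IsTree) (r : W) (x? : Option W)
    (hx : ∀ x ∈ x?, Even (F.dist r x) ∧ 4 ≤ F.dist r x)
    (X Y : Finset V) (hXY : Disjoint X Y)
    (hreg : G.IsUniform ε X Y) (hdens : d ≤ (G.edgeDensity X Y : ℝ))
    (hcard : X.card = Y.card)
    (U P : Finset V) (hU : U ⊆ X ∪ Y) (hP : P ⊆ X) (hUP : Disjoint U P)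
    (v : V) (hv : v ∈ X) (hvP : v ∉ P)
    (h1 : η * X.card ≤ ((X ∩ U).card : ℝ))
    (h1' : η * X.card ≤ ((Y ∩ U).card : ℝ))
    (h2 : 2 * ε * X.card ≤ (P.card : ℝ))
    (h3 : 2 * ε * Y.card ≤ (((Y ∩ U).filter fun y => G.Adj v y).card : ℝ))
    (h4 : (Fintype.card W : ℝ) ≤ ε * X.card) :
    ∃ φ : F →g G, Function.Injective φ ∧ φ r = v ∧
      (∀ a : W, a ≠ r → x? ≠ some a → φ a ∈ U) ∧
      ∀ x₀ : W, x? = some x₀ → φ x₀ ∈ P := by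
  classical
  have hconn := hF.isConnected
  -- numeric facts
  have hWpos : 0 < Fintype.card W := Fintype.card_pos_iff.2 ⟨r⟩
  have hW1 : (1:ℝ) ≤ (Fintype.card W : ℝ) := by exact_mod_cast hWpos
  have hεX1 : (1:ℝ) ≤ ε * X.card := le_trans hW1 h4
  have hXnn : (0:ℝ) ≤ X.card := Nat.cast_nonneg _
  have hε0 : 0 < ε := by
    by_contra h; push_neg at h
    have : ε * X.card ≤ 0 := mul_nonpos_of_nonpos_of_nonneg h hXnn
    linarith
  have hX0 : (0:ℝ) < X.card := by
    rcases hXnn.lt_or_eq with h | h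
    · exact h
    · rw [← h, mul_zero] at hεX1; linarith
  have hd0 : 0 < d := by linarith
  have hdε : ε < d := by linarith
  have hη0 : 0 < η := by
    have hd2 : 0 < d ^ 2 := by positivity
    by_contra h; push_neg at h
    have : d ^ 2 * η ≤ 0 := mul_nonpos_of_nonneg_of_nonpos hd2.le h
    linarith
  have hdη0 : 0 ≤ d * η := (mul_pos hd0 hη0).le
  have hηd : 24 * ε ≤ d * η := by
    have he2 : d ^ 2 * η = d * (d * η) := by ring
    have ht : d * (d * η) ≤ (1/3) * (d * η) := mul_le_mul_of_nonneg_right hd hdη0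
    linarith
  have hεη : ε ≤ η := by
    have ht : d * η ≤ (1/3) * η := mul_le_mul_of_nonneg_right hd hη0.le
    linarith
  have hYr : (Y.card : ℝ) = X.card := by exact_mod_cast congrArg Nat.cast hcard.symm
  set XU := X ∩ U with hXUdef
  set YU := Y ∩ U with hYUdef
  have hXUX : XU ⊆ X := Finset.inter_subset_left
  have hYUY : YU ⊆ Y := Finset.inter_subset_left
  have hdens' : d ≤ (G.edgeDensity Y X : ℝ) := by
    rw [G.edgeDensity_comm Y X]; exact hdens
  have hεηX := mul_le_mul_of_nonneg_right hεη hXnn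
  have hYUbig : (Y.card : ℝ) * ε ≤ YU.card := by
    rw [hYr]; rw [mul_comm]; linarith
  have hXUbig : (X.card : ℝ) * ε ≤ XU.card := by rw [mul_comm]; linarith
  -- bad sets
  set BX := X.filter (fun u => ((YU.filter (fun y => G.Adj u y)).card : ℝ) < (d - ε) * YU.card)
    with hBXdef
  set BY1 := Y.filter (fun u => ((XU.filter (fun y => G.Adj u y)).card : ℝ) < (d - ε) * XU.card)
    with hBY1def
  have hBXlt : (BX.card : ℝ) < ε * X.card :=
    shrub_bad_small hreg hYUY hYUbig hdens hdε _ (Finset.filter_subset _ _)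
      (fun u hu => (Finset.mem_filter.1 hu).2)
  have hBY1lt : (BY1.card : ℝ) < ε * Y.card :=
    shrub_bad_small hreg.symm hXUX hXUbig hdens' hdε _ (Finset.filter_subset _ _)
      (fun u hu => (Finset.mem_filter.1 hu).2)
  set P' := P \ BX with hP'def
  have hP'X : P' ⊆ X := (Finset.sdiff_subset).trans hP
  have hP'sub : P' ⊆ P := Finset.sdiff_subset
  have hP'big : (X.card : ℝ) * ε ≤ P'.card := by
    have hsd := shrub_real_card_sdiff_ge P BX
    rw [mul_comm]; linarith
  set BY2 := Y.filter (fun u => ((P'.filter (fun y => G.Adj u y)).card : ℝ) < (d - ε) * P'.card)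
    with hBY2def
  have hBY2lt : (BY2.card : ℝ) < ε * Y.card :=
    shrub_bad_small hreg.symm hP'X hP'big hdens' hdε _ (Finset.filter_subset _ _)
      (fun u hu => (Finset.mem_filter.1 hu).2)
  -- degree extractors
  have degBX : ∀ u ∈ X, u ∉ BX →
      (d - ε) * YU.card ≤ ((YU.filter (fun y => G.Adj u y)).card : ℝ) := by
    intro u hu hnb
    by_contra hlt; push_neg at hlt
    exact hnb (Finset.mem_filter.2 ⟨hu, hlt⟩)
  have degBY1 : ∀ u ∈ Y, u ∉ BY1 →
      (d - ε) * XU.card ≤ ((XU.filter (fun y => G.Adj u y)).card : ℝ) := by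
    intro u hu hnb
    by_contra hlt; push_neg at hlt
    exact hnb (Finset.mem_filter.2 ⟨hu, hlt⟩)
  have degBY2 : ∀ u ∈ Y, u ∉ BY2 →
      (d - ε) * P'.card ≤ ((P'.filter (fun y => G.Adj u y)).card : ℝ) := by
    intro u hu hnb
    by_contra hlt; push_neg at hlt
    exact hnb (Finset.mem_filter.2 ⟨hu, hlt⟩)
  -- size lower bounds
  have hεd2 : ε ≤ d / 2 := by linarith
  have hXUc : 12 * (ε * X.card) ≤ (d - ε) * XU.card := by
    have t1 : (0:ℝ) ≤ η * X.card := mul_nonneg hη0.le hXnn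
    have t2 : (d/2) * (η * X.card) ≤ (d - ε) * XU.card :=
      mul_le_mul (by linarith) h1 t1 (by linarith)
    have t3 := mul_le_mul_of_nonneg_right hηd hXnn
    linarith
  have hYUc : 12 * (ε * X.card) ≤ (d - ε) * YU.card := by
    have t1 : (0:ℝ) ≤ η * X.card := mul_nonneg hη0.le hXnn
    have t2 : (d/2) * (η * X.card) ≤ (d - ε) * YU.card :=
      mul_le_mul (by linarith) h1' t1 (by linarith)
    have t3 := mul_le_mul_of_nonneg_right hηd hXnn
    linarith
  have hP'1 : (1:ℝ) ≤ P'.card := by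
    have : ε * X.card ≤ P'.card := by rw [mul_comm] at hP'big; linarith
    linarith
  -- membership in U of placed vertices
  have hXUU : ∀ {c}, c ∈ XU \ BX → c ∈ U := fun hc =>
    (Finset.mem_inter.1 (Finset.mem_sdiff.1 hc).1).2
  have hYUU : ∀ {c}, c ∈ YU \ BY1 → c ∈ U := fun hc =>
    (Finset.mem_inter.1 (Finset.mem_sdiff.1 hc).1).2
  -- the main induction
  have key : ∀ k (s : Finset W) (φ : W → V),
      r ∈ s →
      (∀ a b : W, F.Adj a b → F.dist r a + 1 = F.dist r b → b ∈ s → a ∈ s) →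
      φ r = v →
      (∀ w ∈ s, x? = some w → φ w ∈ P') →
      (∀ w ∈ s, w ≠ r → x? ≠ some w → Even (F.dist r w) → φ w ∈ XU \ BX) →
      (∀ w ∈ s, ¬ Even (F.dist r w) → φ w ∈ YU \ BY1 ∧
        (∀ x₀, x? = some x₀ → F.Adj w x₀ → F.dist r w + 1 = F.dist r x₀ → φ w ∉ BY2)) →
      (∀ a ∈ s, ∀ b ∈ s, φ a = φ b → a = b) →
      (∀ a ∈ s, ∀ b ∈ s, F.Adj a b → G.Adj (φ a) (φ b)) →
      (Finset.univ \ s).card ≤ k →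
      ∃ ψ : W → V, ψ r = v ∧
        (∀ w, x? = some w → ψ w ∈ P') ∧
        (∀ w, w ≠ r → x? ≠ some w → Even (F.dist r w) → ψ w ∈ XU \ BX) ∧
        (∀ w, ¬ Even (F.dist r w) → ψ w ∈ YU \ BY1) ∧
        Function.Injective ψ ∧
        ∀ a b, F.Adj a b → G.Adj (ψ a) (ψ b) := by
    intro k
    induction k with
    | zero =>
      intro s φ hrs hcl hφr h4a h4b h4c hinj hhom hck
      have hall : ∀ w : W, w ∈ s := by
        have he : Finset.univ \ s = ∅ := Finset.card_eq_zero.1 (Nat.le_zero.1 hck)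
        have hsub : (Finset.univ : Finset W) ⊆ s := by
          rwa [Finset.sdiff_eq_empty_iff_subset] at he
        exact fun w => hsub (Finset.mem_univ w)
      exact ⟨φ, hφr, fun w h => h4a w (hall w) h,
        fun w hw hxw he => h4b w (hall w) hw hxw he,
        fun w he => (h4c w (hall w) he).1,
        fun a b hab => hinj a (hall a) b (hall b) hab,
        fun a b hab => hhom a (hall a) b (hall b) hab⟩
    | succ k ih =>
      intro s φ hrs hcl hφr h4a h4b h4c hinj hhom hck
      rcases (Finset.univ \ s).eq_empty_or_nonempty with he | hne
      · exact ih s φ hrs hcl hφr h4a h4b h4c hinj hhom (by simp [he])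
      obtain ⟨w, hwmem, hwmin⟩ := Finset.exists_min_image _ (F.dist r) hne
      have hws : w ∉ s := (Finset.mem_sdiff.1 hwmem).2
      have hwr : w ≠ r := fun h => hws (h ▸ hrs)
      obtain ⟨p, hpadj, hpd⟩ := shrub_exists_parent hconn (r := r) hwr
      have hps : p ∈ s := by
        by_contra hp0
        have := hwmin p (Finset.mem_sdiff.2 ⟨Finset.mem_univ _, hp0⟩)
        omega
      -- used vertices
      have husedc : ((s.image φ).card : ℝ) ≤ ε * X.card - 1 := by
        have hi := Finset.card_image_le (s := s) (f := φ)
        have hu1 : s.card + 1 ≤ Fintype.card W := by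
          have hle := Finset.card_le_univ (insert w s)
          rw [Finset.card_insert_of_notMem hws] at hle
          exact le_trans hle (le_of_eq Finset.card_univ)
        have : ((s.image φ).card : ℝ) + 1 ≤ (Fintype.card W : ℝ) := by
          exact_mod_cast Nat.le_trans (by omega) hu1
        linarith
      -- the images of s avoid P'
      have husedP : x? = some w → ∀ u ∈ s, φ u ∉ P' := by
        intro hwx u hu hmem
        have hmemP : φ u ∈ P := (Finset.mem_sdiff.1 hmem).1
        by_cases hur : u = r
        · rw [hur, hφr] at hmemP; exact hvP hmemP
        by_cases hxu : x? = some u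
        · rw [hwx] at hxu
          exact hws ((Option.some.inj hxu) ▸ hu)
        by_cases heu : Even (F.dist r u)
        · exact Finset.disjoint_left.1 hUP (hXUU (h4b u hu hur hxu heu)) hmemP
        · exact Finset.disjoint_left.1 hUP (hYUU (h4c u hu heu).1) hmemP
      -- obtain the image for w
      have hobt : ∃ c : V, G.Adj (φ p) c ∧ (∀ u ∈ s, φ u ≠ c) ∧
          (x? = some w → c ∈ P') ∧
          (w ≠ r → x? ≠ some w → Even (F.dist r w) → c ∈ XU \ BX) ∧
          (¬ Even (F.dist r w) → c ∈ YU \ BY1 ∧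
            (∀ x₀, x? = some x₀ → F.Adj w x₀ → F.dist r w + 1 = F.dist r x₀ → c ∉ BY2)) := by
        by_cases hwx : x? = some w
        · -- CASE A : w is the adventitious root
          obtain ⟨hevw, h4w⟩ := hx w hwx
          have hpodd : ¬ Even (F.dist r p) := by
            rw [← hpd] at hevw
            exact fun h => (Nat.even_add_one.mp hevw) h
          obtain ⟨hpYU, hpB2f⟩ := h4c p hps hpodd
          have hpB2 : φ p ∉ BY2 := hpB2f w hwx hpadj hpd
          have hφpY : φ p ∈ Y := hYUY (Finset.mem_sdiff.1 hpYU).1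
          have hdeg := degBY2 (φ p) hφpY hpB2
          have hCpos : (0:ℝ) < ((P'.filter (fun y => G.Adj (φ p) y)).card : ℝ) := by
            have hpos : (0:ℝ) < (d - ε) * P'.card :=
              mul_pos (by linarith) (by linarith)
            linarith
          obtain ⟨c, hc⟩ := Finset.card_pos.1 (by exact_mod_cast hCpos)
          obtain ⟨hcP', hcadj⟩ := Finset.mem_filter.1 hc
          refine ⟨c, hcadj, ?_, fun _ => hcP', ?_, ?_⟩
          · intro u hu hequ
            exact husedP hwx u hu (hequ ▸ hcP')
          · intro _ hxw _; exact absurd hwx hxw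
          · intro hne; exact absurd hevw hne
        · by_cases hwe : Even (F.dist r w)
          · -- CASE B : w is an ordinary even vertex
            have hpodd : ¬ Even (F.dist r p) := by
              rw [← hpd] at hwe
              exact fun h => (Nat.even_add_one.mp hwe) h
            have hpYU := (h4c p hps hpodd).1
            have hφpY : φ p ∈ Y := hYUY (Finset.mem_sdiff.1 hpYU).1
            have hφpnB : φ p ∉ BY1 := (Finset.mem_sdiff.1 hpYU).2
            have hdeg := degBY1 (φ p) hφpY hφpnB
            have hs1 := shrub_filter_sdiff_card_ge XU BX (fun y => G.Adj (φ p) y)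
            have hs2 := shrub_real_card_sdiff_ge
              ((XU \ BX).filter (fun y => G.Adj (φ p) y)) (s.image φ)
            have hCpos : (0:ℝ) <
                (((((XU \ BX).filter (fun y => G.Adj (φ p) y)) \ s.image φ)).card : ℝ) := by
              linarith
            obtain ⟨c, hc⟩ := Finset.card_pos.1 (by exact_mod_cast hCpos)
            obtain ⟨hcf, hcni⟩ := Finset.mem_sdiff.1 hc
            obtain ⟨hcXU, hcadj⟩ := Finset.mem_filter.1 hcf
            refine ⟨c, hcadj, ?_, fun hxw => absurd hxw hwx,
              fun _ _ _ => hcXU, fun hne => absurd hwe hne⟩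
            intro u hu hequ; exact hcni (Finset.mem_image.2 ⟨u, hu, hequ⟩)
          · -- CASE C : w is an odd vertex
            have hpe : Even (F.dist r p) := by
              by_contra hpo
              have h5 : Even (F.dist r p + 1) := Nat.even_add_one.2 hpo
              rw [hpd] at h5; exact hwe h5
            by_cases hpr : p = r
            · -- C1 : parent is the root
              have hd1 : F.dist r w = 1 := by
                rw [hpr, SimpleGraph.dist_self] at hpd; omega
              have hs1 := shrub_filter_sdiff_card_ge YU BY1 (fun y => G.Adj v y)
              have hs2 := shrub_real_card_sdiff_ge
                ((YU \ BY1).filter (fun y => G.Adj v y)) (s.image φ)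
              have hCpos : (0:ℝ) <
                  ((((YU \ BY1).filter (fun y => G.Adj v y)) \ s.image φ).card : ℝ) := by
                have h3' := h3
                rw [hYr] at h3'
                have hBY1lt' := hBY1lt
                rw [hYr] at hBY1lt'
                linarith
              obtain ⟨c, hc⟩ := Finset.card_pos.1 (by exact_mod_cast hCpos)
              obtain ⟨hcf, hcni⟩ := Finset.mem_sdiff.1 hc
              obtain ⟨hcYU, hcadj⟩ := Finset.mem_filter.1 hcf
              have hcadj' : G.Adj (φ p) c := by rw [hpr, hφr]; exact hcadj
              refine ⟨c, hcadj', ?_, fun hxw => absurd hxw hwx,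
                fun _ _ he => absurd he hwe, fun _ => ⟨hcYU, ?_⟩⟩
              · intro u hu hequ; exact hcni (Finset.mem_image.2 ⟨u, hu, hequ⟩)
              · intro x₀ hx₀ hadjwx hdx
                obtain ⟨_, h4x⟩ := hx x₀ hx₀
                omega
            · -- C2 : parent is a non-root even vertex
              have hφpXB : φ p ∈ X ∧ φ p ∉ BX := by
                by_cases hxp : x? = some p
                · have hmem := h4a p hps hxp
                  exact ⟨hP'X hmem, (Finset.mem_sdiff.1 hmem).2⟩
                · have hmem := h4b p hps hpr hxp hpe
                  exact ⟨hXUX (Finset.mem_sdiff.1 hmem).1, (Finset.mem_sdiff.1 hmem).2⟩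
              have hdeg := degBX (φ p) hφpXB.1 hφpXB.2
              have hs0 := shrub_filter_sdiff_card_ge YU BY1 (fun y => G.Adj (φ p) y)
              have hs1 := shrub_filter_sdiff_card_ge (YU \ BY1) BY2 (fun y => G.Adj (φ p) y)
              have hs2 := shrub_real_card_sdiff_ge
                (((YU \ BY1) \ BY2).filter (fun y => G.Adj (φ p) y)) (s.image φ)
              have hCpos : (0:ℝ) <
                  (((((YU \ BY1) \ BY2).filter (fun y => G.Adj (φ p) y)) \ s.image φ).card : ℝ) := by
                have hBY1lt' := hBY1lt
                have hBY2lt' := hBY2lt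
                rw [hYr] at hBY1lt' hBY2lt'
                linarith
              obtain ⟨c, hc⟩ := Finset.card_pos.1 (by exact_mod_cast hCpos)
              obtain ⟨hcf, hcni⟩ := Finset.mem_sdiff.1 hc
              obtain ⟨hcYU2, hcadj⟩ := Finset.mem_filter.1 hcf
              obtain ⟨hcYU, hcB2⟩ := Finset.mem_sdiff.1 hcYU2
              refine ⟨c, hcadj, ?_, fun hxw => absurd hxw hwx,
                fun _ _ he => absurd he hwe, fun _ => ⟨hcYU, fun _ _ _ _ => hcB2⟩⟩
              intro u hu hequ; exact hcni (Finset.mem_image.2 ⟨u, hu, hequ⟩)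
      obtain ⟨c, hcadj, hcnu, hcA, hcB, hcC⟩ := hobt
      -- extend the embedding
      have hval : ∀ u, u ≠ w → Function.update φ w c u = φ u :=
        fun u hu => Function.update_of_ne hu _ _
      have hφ'w : Function.update φ w c w = c := Function.update_self _ _ _
      have hvs : ∀ u ∈ s, Function.update φ w c u = φ u :=
        fun u hu => hval u (fun h => hws (h ▸ hu))
      refine ih (insert w s) (Function.update φ w c)
        (Finset.mem_insert_of_mem hrs) ?_ ?_ ?_ ?_ ?_ ?_ ?_ ?_
      · -- closure
        intro a b hab hdd hbmem
        rcases Finset.mem_insert.1 hbmem with hbw | hbs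
        · subst hbw
          by_contra ha
          have hans : a ∉ s := fun h => ha (Finset.mem_insert_of_mem h)
          have := hwmin a (Finset.mem_sdiff.2 ⟨Finset.mem_univ _, hans⟩)
          omega
        · exact Finset.mem_insert_of_mem (hcl a b hab hdd hbs)
      · rw [hval r (Ne.symm hwr)]; exact hφr
      · intro u hu hxu
        rcases Finset.mem_insert.1 hu with huw | hus
        · subst huw; rw [hφ'w]; exact hcA hxu
        · rw [hvs u hus]; exact h4a u hus hxu
      · intro u hu hur hxu heu
        rcases Finset.mem_insert.1 hu with huw | hus
        · subst huw; rw [hφ'w]; exact hcB hur hxu heu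
        · rw [hvs u hus]; exact h4b u hus hur hxu heu
      · intro u hu heu
        rcases Finset.mem_insert.1 hu with huw | hus
        · subst huw
          refine ⟨by rw [hφ'w]; exact (hcC heu).1, ?_⟩
          intro x₀ ha hb hc'
          rw [hφ'w]; exact (hcC heu).2 x₀ ha hb hc'
        · refine ⟨by rw [hvs u hus]; exact (h4c u hus heu).1, ?_⟩
          intro x₀ ha hb hc'
          rw [hvs u hus]; exact (h4c u hus heu).2 x₀ ha hb hc'
      · -- injectivity
        intro a ha b hb heq
        rcases Finset.mem_insert.1 ha with haw | has <;>
          rcases Finset.mem_insert.1 hb with hbw | hbs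
        · rw [haw, hbw]
        · subst haw
          rw [hφ'w, hvs b hbs] at heq
          exact absurd heq.symm (hcnu b hbs)
        · subst hbw
          rw [hφ'w, hvs a has] at heq
          exact absurd heq (hcnu a has)
        · rw [hvs a has, hvs b hbs] at heq
          exact hinj a has b hbs heq
      · -- homomorphism
        intro a ha b hb hab
        have hcase : ∀ b' ∈ s, F.Adj w b' → b' = p := by
          intro b' hb' hab'
          rcases shrub_adj_dist_cases hF (r := r) hab' with hcc | hcc
          · exact absurd (hcl w b' hab' hcc hb') hws
          · exact shrub_parent_unique hF hab'.symm hpadj hcc hpd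
        rcases Finset.mem_insert.1 ha with haw | has <;>
          rcases Finset.mem_insert.1 hb with hbw | hbs
        · subst haw; subst hbw
          exact absurd hab (F.irrefl)
        · subst haw
          have hbp := hcase b hbs hab
          rw [hφ'w, hvs b hbs, hbp]
          exact hcadj.symm
        · subst hbw
          have hap := hcase a has hab.symm
          rw [hφ'w, hvs a has, hap]
          exact hcadj
        · rw [hvs a has, hvs b hbs]
          exact hhom a has b hbs hab
      · -- cardinality decreases
        have hsub : Finset.univ \ insert w s ⊆ Finset.univ \ s :=
          Finset.sdiff_subset_sdiff (Finset.Subset.refl _) (Finset.subset_insert w s)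
        have hwex : w ∉ Finset.univ \ insert w s := by simp
        have hssub : Finset.univ \ insert w s ⊂ Finset.univ \ s :=
          (Finset.ssubset_iff_of_subset hsub).2 ⟨w, hwmem, hwex⟩
        have := Finset.card_lt_card hssub
        omega
  -- apply the induction to the initial embedding of the root
  obtain ⟨ψ, hψr, hψa, hψb, hψc, hψinj, hψhom⟩ :=
    key (Finset.univ \ {r}).card {r} (fun _ => v) (Finset.mem_singleton_self r)
      (by intro a b hab hdd hbs
          rw [Finset.mem_singleton] at hbs
          rw [hbs, SimpleGraph.dist_self] at hdd; omega)
      rfl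
      (by intro u hu hxu
          rw [Finset.mem_singleton] at hu
          obtain ⟨_, h4x⟩ := hx u hxu
          rw [hu, SimpleGraph.dist_self] at h4x; omega)
      (by intro u hu hur _ _
          rw [Finset.mem_singleton] at hu; exact absurd hu hur)
      (by intro u hu heu
          rw [Finset.mem_singleton] at hu
          rw [hu, SimpleGraph.dist_self] at heu
          exact absurd Even.zero heu)
      (by intro a ha b hb _
          rw [Finset.mem_singleton] at ha hb; rw [ha, hb])
      (by intro a ha b hb hab
          rw [Finset.mem_singleton] at ha hb
          rw [ha, hb] at hab; exact absurd hab (F.irrefl))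
      le_rfl
  refine ⟨⟨ψ, fun {a b} hab => hψhom a b hab⟩, hψinj, hψr, ?_, ?_⟩
  · intro a har hxa
    by_cases he : Even (F.dist r a)
    · exact hXUU (hψb a har hxa he)
    · exact hYUU (hψc a he)
  · intro x₀ hx₀
    exact hP'sub (hψa x₀ hx₀)
end
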